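/- arXiv:2302.05689 — 3 statements merged into one kernel-verified Lean document; each statement's English description precedes it below -/
import Mathlib

section
/- Let H be a bounded self-adjoint operator on a Hilbert space with spectrum contained in (-∞, -σ], σ > 0, and let f : [0,∞) → X be continuous with ‖f(t)‖ ≤ C e^{-σt}. Then the mild solution ν(t) = exp(tH)ν₀ + ∫₀ᵗ exp((t-s)H) f(s) ds satisfies ‖ν(t)‖ ≤ C̃ (1+t) e^{-σ t} for some constant C̃ > 0 and all t ≥ 0. -/
set_option maxHeartbeats 1000000 in
lemma exp_smul_opNorm_le_aux
    {X : Type*} [NormedAddCommGroup X] [InnerProductSpace ℂ X] [CompleteSpace X]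
    (H : X →L[ℂ] X) (hH : IsSelfAdjoint H) (σ : ℝ)
    (hspec : spectrum ℂ H ⊆ (Complex.ofReal '' Set.Iic (-σ)))
    {s : ℝ} (hs : 0 ≤ s) :
    ‖NormedSpace.exp (s • H)‖ ≤ Real.exp (-σ * s) := by
  have hsH : IsSelfAdjoint (s • H) := by rw [IsSelfAdjoint, star_smul, star_trivial, hH.star_eq]
  have h1 : NormedSpace.exp (s • H) = NormedSpace.exp (s • H) := by
    rfl
  have hspecR : ∀ x ∈ spectrum ℝ H, x ≤ -σ := by
    intro x hx
    have hx' : (Complex.ofReal x) ∈ spectrum ℂ H := by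
      have := spectrum.algebraMap_mem_iff (R := ℝ) (S := ℂ) (A := X →L[ℂ] X)
        (a := H) (r := x)
      simpa [Complex.coe_algebraMap] using this.mpr hx
    obtain ⟨y, hy, hyx⟩ := hspec hx'
    have : y = x := by exact_mod_cast hyx
    simpa [this] using hy
  rw [h1, ← CFC.real_exp_eq_normedSpace_exp hsH,
    ← cfc_comp_smul s Real.exp H (Real.continuous_exp.continuousOn) hH]
  apply norm_cfc_le (Real.exp_nonneg _)
  intro x hx
  rw [Real.norm_eq_abs, abs_of_pos (Real.exp_pos _), Real.exp_le_exp]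
  have hx' := hspecR x hx
  calc s • x = s * x := rfl
    _ ≤ s * (-σ) := mul_le_mul_of_nonneg_left hx' hs
    _ = -σ * s := by ring

/-- resonant case `α = σ`: the mild solution satisfies
`‖ν(t)‖ ≤ C̃ (1+t) e^{-σ t}`. -/
theorem mild_solution_decay_of_spectral_gap_resonant
    {X : Type*} [NormedAddCommGroup X] [InnerProductSpace ℂ X] [CompleteSpace X]
    (H : X →L[ℂ] X) (hH : IsSelfAdjoint H) (σ : ℝ) (hσ : 0 < σ)
    (hspec : spectrum ℂ H ⊆ (Complex.ofReal '' Set.Iic (-σ)))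
    (f : ℝ → X) (hf : ContinuousOn f (Set.Ici 0))
    (C : ℝ) (hC : 0 < C)
    (hfbound : ∀ t ≥ (0:ℝ), ‖f t‖ ≤ C * Real.exp (-σ * t))
    (ν₀ : X) (ν : ℝ → X)
    (hν : ∀ t ≥ (0:ℝ), ν t = NormedSpace.exp (t • H) ν₀
      + ∫ s in (0:ℝ)..t, NormedSpace.exp ((t - s) • H) (f s)) :
    ∃ C' > (0:ℝ), ∀ t ≥ (0:ℝ), ‖ν t‖ ≤ C' * (1 + t) * Real.exp (-σ * t) := by
  refine ⟨‖ν₀‖ + C, by positivity, fun t ht => ?_⟩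
  rw [hν t ht]
  have hexp := fun {s} (hs : (0:ℝ) ≤ s) =>
    exp_smul_opNorm_le_aux H hH σ hspec hs
  have h1 : ‖NormedSpace.exp (t • H) ν₀‖ ≤ ‖ν₀‖ * Real.exp (-σ * t) := by
    calc ‖NormedSpace.exp (t • H) ν₀‖ ≤ ‖NormedSpace.exp (t • H)‖ * ‖ν₀‖ :=
          (NormedSpace.exp (t • H)).le_opNorm ν₀
      _ ≤ Real.exp (-σ * t) * ‖ν₀‖ :=
          mul_le_mul_of_nonneg_right (hexp ht) (norm_nonneg _)
      _ = ‖ν₀‖ * Real.exp (-σ * t) := mul_comm _ _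
  have h2 : ‖∫ s in (0:ℝ)..t, NormedSpace.exp ((t - s) • H) (f s)‖
      ≤ C * Real.exp (-σ * t) * t := by
    have := intervalIntegral.norm_integral_le_of_norm_le_const
      (C := C * Real.exp (-σ * t)) (a := (0:ℝ)) (b := t)
      (f := fun s => NormedSpace.exp ((t - s) • H) (f s)) ?_
    · calc ‖∫ s in (0:ℝ)..t, NormedSpace.exp ((t - s) • H) (f s)‖
          ≤ C * Real.exp (-σ * t) * |t - 0| := this
        _ = C * Real.exp (-σ * t) * t := by rw [sub_zero, abs_of_nonneg ht]
    · intro s hs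
      rw [Set.uIoc_of_le ht] at hs
      obtain ⟨hs0, hst⟩ := hs
      have hs0' : (0:ℝ) ≤ s := le_of_lt hs0
      calc ‖NormedSpace.exp ((t - s) • H) (f s)‖
          ≤ ‖NormedSpace.exp ((t - s) • H)‖ * ‖f s‖ :=
            (NormedSpace.exp ((t - s) • H)).le_opNorm (f s)
        _ ≤ Real.exp (-σ * (t - s)) * (C * Real.exp (-σ * s)) := by
            apply mul_le_mul (hexp (by linarith)) (hfbound s hs0') (norm_nonneg _)
              (Real.exp_nonneg _)
        _ = C * Real.exp (-σ * t) := by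
            rw [mul_comm, mul_assoc, ← Real.exp_add]
            ring_nf
  calc ‖NormedSpace.exp (t • H) ν₀ + ∫ s in (0:ℝ)..t, NormedSpace.exp ((t - s) • H) (f s)‖
      ≤ ‖ν₀‖ * Real.exp (-σ * t) + C * Real.exp (-σ * t) * t :=
        (norm_add_le _ _).trans (add_le_add h1 h2)
    _ ≤ (‖ν₀‖ + C) * (1 + t) * Real.exp (-σ * t) := by
        have h := Real.exp_nonneg (-σ * t)
        have hn := norm_nonneg ν₀
        nlinarith [mul_nonneg hC.le ht, mul_nonneg hn ht]
end

section
/- Let H be a bounded self-adjoint operator on a Hilbert space with spectrum contained in (-∞, -σ], σ > 0, and let f : [0,∞) → X be continuous with f(t) → f* as t → ∞. Then the mild solution ν(t) = exp(tH)ν₀ + ∫₀ᵗ exp((t-s)H) f(s) ds of ν' = Hν + f satisfies ν(t) → -H⁻¹ f* as t → ∞. -/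
open Filter

open NormedSpace in
private theorem aux_expC_eq {X : Type*} [NormedAddCommGroup X] [InnerProductSpace ℂ X]
    [CompleteSpace X] (H : X →L[ℂ] X) (u : ℝ) : exp (u • H) = exp (u • H) := by
  rfl

open NormedSpace in
private theorem aux_exp_norm_le {X : Type*} [NormedAddCommGroup X] [InnerProductSpace ℂ X]
    [CompleteSpace X] (H : X →L[ℂ] X) (hH : IsSelfAdjoint H) (σ : ℝ)
    (hspec : spectrum ℂ H ⊆ (Complex.ofReal '' Set.Iic (-σ)))
    {t : ℝ} (ht : 0 ≤ t) : ‖exp (t • H)‖ ≤ Real.exp (-(σ * t)) := by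
  have hsa : IsSelfAdjoint (t • H) := by
    unfold IsSelfAdjoint; rw [star_smul, star_trivial, hH.star_eq]
  rw [← CFC.real_exp_eq_normedSpace_exp hsa,
    ← cfc_comp_smul t Real.exp H]
  refine norm_cfc_le (Real.exp_nonneg _) fun x hx => ?_
  have hx' : x ≤ -σ := by
    have : (x : ℂ) ∈ spectrum ℂ H := spectrum.algebraMap_mem_iff ℂ |>.mpr hx
    obtain ⟨y, hy, hyx⟩ := hspec this
    have hxy : y = x := by exact_mod_cast hyx
    simpa [hxy] using hy
  rw [Real.norm_eq_abs, abs_of_pos (Real.exp_pos _), Real.exp_le_exp]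
  calc t • x ≤ t * (-σ) := by
        simpa [smul_eq_mul] using mul_le_mul_of_nonneg_left hx' ht
    _ = -(σ * t) := by ring

open NormedSpace in
private theorem aux_exp_apply_norm_le {X : Type*} [NormedAddCommGroup X] [InnerProductSpace ℂ X]
    [CompleteSpace X] (H : X →L[ℂ] X) (hH : IsSelfAdjoint H) (σ : ℝ)
    (hspec : spectrum ℂ H ⊆ (Complex.ofReal '' Set.Iic (-σ)))
    {t : ℝ} (ht : 0 ≤ t) (x : X) :
    ‖exp (t • H) x‖ ≤ Real.exp (-(σ * t)) * ‖x‖ :=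
  le_trans ((exp (t • H)).le_opNorm x)
    (mul_le_mul_of_nonneg_right (aux_exp_norm_le H hH σ hspec ht) (norm_nonneg x))

open NormedSpace in
private theorem aux_expD {X : Type*} [NormedAddCommGroup X] [InnerProductSpace ℂ X]
    [CompleteSpace X] (H : X →L[ℂ] X) (v : X) (t : ℝ) :
    HasDerivAt (fun u : ℝ => exp (u • H) v) (H (exp (t • H) v)) t := by
  have h1 : HasDerivAt (fun u : ℝ => exp (u • H)) (H * exp (t • H)) t :=
    hasDerivAt_exp_smul_const' H t
  have h2 := ((ContinuousLinearMap.apply ℂ X v).restrictScalars ℝ).hasFDerivAt.comp_hasDerivAt t h1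
  simpa only [ContinuousLinearMap.coe_restrictScalars', Function.comp_def,
    ContinuousLinearMap.apply_apply, ContinuousLinearMap.mul_apply, aux_expC_eq] using h2

set_option synthInstance.maxHeartbeats 1000000 in
open NormedSpace in
private theorem aux_expCont {X : Type*} [NormedAddCommGroup X] [InnerProductSpace ℂ X]
    [CompleteSpace X] (H : X →L[ℂ] X) : Continuous (fun u : ℝ => exp (u • H)) :=
  continuous_iff_continuousAt.2 fun u => (hasDerivAt_exp_smul_const' (𝕂 := ℝ) H u).continuousAt

open NormedSpace in
private theorem aux_expApplyCont {X : Type*} [NormedAddCommGroup X] [InnerProductSpace ℂ X]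
    [CompleteSpace X] (H : X →L[ℂ] X) (t : ℝ) (g : ℝ → X) (s : Set ℝ)
    (hg : ContinuousOn g s) :
    ContinuousOn (fun u : ℝ => exp ((t - u) • H) (g u)) s :=
  (((aux_expCont H).comp (continuous_const.sub continuous_id)).continuousOn).clm_apply hg

open NormedSpace in
private theorem aux_int_fstar {X : Type*} [NormedAddCommGroup X] [InnerProductSpace ℂ X]
    [CompleteSpace X] (H : X →L[ℂ] X) (fstar w : X) (hw : H w = -fstar) (t : ℝ) :
    ∫ s in (0:ℝ)..t, exp ((t - s) • H) fstar = w - exp (t • H) w := by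
  have hD : ∀ s ∈ Set.uIcc (0:ℝ) t,
      HasDerivAt (fun s : ℝ => exp ((t - s) • H) w) (exp ((t - s) • H) fstar) s := by
    intro s _
    have h1 := aux_expD H w (t - s)
    have h2 : HasDerivAt (fun s : ℝ => t - s) (-1) s := (hasDerivAt_id s).const_sub t
    have h3 := h1.scomp s h2
    have hc : Commute H (exp ((t - s) • H)) :=
      ((Commute.refl H).smul_right (t - s)).exp_right
    have hkey : H (exp ((t - s) • H) w) = -(exp ((t - s) • H) fstar) := by
      have : H (exp ((t - s) • H) w) = exp ((t - s) • H) (H w) := by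
        rw [aux_expC_eq]
        exact DFunLike.congr_fun hc.eq w
      rw [this, hw, map_neg]
    simpa [hkey, Function.comp_def] using h3
  have hint : IntervalIntegrable (fun s => exp ((t - s) • H) fstar) MeasureTheory.volume 0 t :=
    (aux_expApplyCont H t (fun _ => fstar) _ continuousOn_const).intervalIntegrable
  have := intervalIntegral.integral_eq_sub_of_hasDerivAt hD hint
  simpa using this

private theorem aux_scalar_int (σ : ℝ) (hσ : 0 < σ) (T t : ℝ) :
    ∫ s in T..t, Real.exp (σ * (s - t)) = σ⁻¹ - σ⁻¹ * Real.exp (σ * (T - t)) := by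
  have hd : ∀ s ∈ Set.uIcc T t,
      HasDerivAt (fun s => σ⁻¹ * Real.exp (σ * (s - t))) (Real.exp (σ * (s - t))) s := by
    intro s _
    have h1 : HasDerivAt (fun s : ℝ => σ * (s - t)) σ s := by
      simpa using ((hasDerivAt_id s).sub_const t).const_mul σ
    have h2 := (Real.hasDerivAt_exp (σ * (s - t))).comp s h1
    have h3 := h2.const_mul σ⁻¹
    have h4 : σ⁻¹ * (Real.exp (σ * (s - t)) * σ) = Real.exp (σ * (s - t)) := by
      rw [mul_comm (Real.exp _) σ, inv_mul_cancel_left₀ hσ.ne']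
    rw [h4] at h3; exact h3
  have hint : IntervalIntegrable (fun s => Real.exp (σ * (s - t))) MeasureTheory.volume T t :=
    (Real.continuous_exp.comp
      (continuous_const.mul (continuous_id.sub continuous_const))).intervalIntegrable T t
  have := intervalIntegral.integral_eq_sub_of_hasDerivAt hd hint
  rw [this]; simp

set_option maxHeartbeats 2000000 in
/-- if the forcing `f(t)` converges to `f*`, the mild solution of
`ν' = Hν + f` converges to `-H⁻¹ f*` (i.e. to the unique `w` with `H w = -f*`). -/
theorem mild_solution_tendsto_of_forcing_tendsto
    {X : Type*} [NormedAddCommGroup X] [InnerProductSpace ℂ X] [CompleteSpace X]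
    (H : X →L[ℂ] X) (hH : IsSelfAdjoint H) (σ : ℝ) (hσ : 0 < σ)
    (hspec : spectrum ℂ H ⊆ (Complex.ofReal '' Set.Iic (-σ)))
    (f : ℝ → X) (hf : ContinuousOn f (Set.Ici 0))
    (fstar : X) (hflim : Tendsto f atTop (nhds fstar))
    (ν₀ : X) (ν : ℝ → X)
    (hν : ∀ t ≥ (0:ℝ), ν t = NormedSpace.exp (t • H) ν₀
      + ∫ s in (0:ℝ)..t, NormedSpace.exp ((t - s) • H) (f s))
    (w : X) (hw : H w = -fstar) :
    Tendsto ν atTop (nhds w) := by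
  rw [Metric.tendsto_nhds]
  intro ε hε
  set ε' : ℝ := σ * ε / 4 with hε'def
  have hε' : 0 < ε' := by positivity
  obtain ⟨T₀, hT₀⟩ := (Metric.tendsto_atTop.mp hflim) ε' hε'
  set T : ℝ := max T₀ 0 with hTdef
  have hT0 : (0:ℝ) ≤ T := le_max_right _ _
  obtain ⟨M, hM⟩ := (isCompact_Icc (a := (0:ℝ)) (b := T)).exists_bound_of_continuousOn
    ((hf.mono Set.Icc_subset_Ici_self).sub (continuousOn_const (c := fstar)))
  have hM0 : 0 ≤ M := le_trans (norm_nonneg _) (hM 0 ⟨le_refl 0, hT0⟩)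
  set C : ℝ := ‖ν₀ - w‖ + M * T * Real.exp (σ * T) with hCdef
  have hC0 : 0 ≤ C := by positivity
  have h0 : Tendsto (fun t : ℝ => C * Real.exp (-(σ * t))) atTop (nhds 0) := by
    have h1 : Tendsto (fun t : ℝ => -(σ * t)) atTop atBot := by
      apply tendsto_neg_atTop_atBot.comp
      exact Tendsto.const_mul_atTop hσ tendsto_id
    simpa using (Real.tendsto_exp_atBot.comp h1).const_mul C
  have hev : ∀ᶠ t in atTop, C * Real.exp (-(σ * t)) < ε / 2 :=
    h0.eventually_lt_const (by positivity)
  filter_upwards [hev, eventually_ge_atTop T] with t hevt hTt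
  have ht0 : (0:ℝ) ≤ t := le_trans hT0 hTt
  set D : ℝ → X := fun s => NormedSpace.exp ((t - s) • H) (f s - fstar) with hDdef
  have hIci : Set.uIcc (0:ℝ) t ⊆ Set.Ici 0 := by
    rw [Set.uIcc_of_le ht0]; exact Set.Icc_subset_Ici_self
  have hDc : ContinuousOn D (Set.uIcc (0:ℝ) t) :=
    aux_expApplyCont H t _ _ ((hf.mono hIci).sub continuousOn_const)
  have iD : IntervalIntegrable D MeasureTheory.volume 0 t := hDc.intervalIntegrable
  have iF : IntervalIntegrable (fun s => NormedSpace.exp ((t - s) • H) fstar)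
      MeasureTheory.volume 0 t :=
    (aux_expApplyCont H t (fun _ => fstar) _ continuousOn_const).intervalIntegrable
  have hsplit : (∫ s in (0:ℝ)..t, NormedSpace.exp ((t - s) • H) (f s))
      = (∫ s in (0:ℝ)..t, D s) + ∫ s in (0:ℝ)..t, NormedSpace.exp ((t - s) • H) fstar := by
    rw [← intervalIntegral.integral_add iD iF]
    congr 1; funext s
    rw [hDdef]; simp only [map_sub]; abel
  have hdecomp : ν t - w = NormedSpace.exp (t • H) (ν₀ - w) + ∫ s in (0:ℝ)..t, D s := by
    rw [hν t ht0, hsplit, aux_int_fstar H fstar w hw t, map_sub]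
    abel
  have iD1 : IntervalIntegrable D MeasureTheory.volume 0 T := by
    apply iD.mono_set
    rw [Set.uIcc_of_le hT0, Set.uIcc_of_le ht0]
    exact Set.Icc_subset_Icc le_rfl hTt
  have iD2 : IntervalIntegrable D MeasureTheory.volume T t := by
    apply iD.mono_set
    rw [Set.uIcc_of_le hTt, Set.uIcc_of_le ht0]
    exact Set.Icc_subset_Icc hT0 le_rfl
  have hDsplit : (∫ s in (0:ℝ)..t, D s)
      = (∫ s in (0:ℝ)..T, D s) + ∫ s in T..t, D s :=
    (intervalIntegral.integral_add_adjacent_intervals iD1 iD2).symm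
  -- bound 1
  have hB1 : ‖∫ s in (0:ℝ)..T, D s‖ ≤ M * T * Real.exp (σ * T) * Real.exp (-(σ * t)) := by
    have hb : ∀ s ∈ Set.uIoc (0:ℝ) T, ‖D s‖ ≤ Real.exp (-(σ * (t - T))) * M := by
      intro s hs
      rw [Set.uIoc_of_le hT0] at hs
      have hs' : s ∈ Set.Icc (0:ℝ) T := ⟨hs.1.le, hs.2⟩
      have hts : (0:ℝ) ≤ t - s := sub_nonneg.mpr (hs'.2.trans hTt)
      have h1 : ‖D s‖ ≤ Real.exp (-(σ * (t - s))) * ‖f s - fstar‖ :=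
        aux_exp_apply_norm_le H hH σ hspec hts _
      refine h1.trans (mul_le_mul ?_ (hM s hs') (norm_nonneg _) (Real.exp_nonneg _))
      rw [Real.exp_le_exp]
      nlinarith [hs'.2, hσ.le]
    calc ‖∫ s in (0:ℝ)..T, D s‖ ≤ Real.exp (-(σ * (t - T))) * M * |T - 0| :=
          intervalIntegral.norm_integral_le_of_norm_le_const hb
      _ = M * T * Real.exp (σ * T) * Real.exp (-(σ * t)) := by
          rw [sub_zero, abs_of_nonneg hT0,
            show -(σ * (t - T)) = σ * T + -(σ * t) by ring, Real.exp_add]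
          ring
  -- bound 2
  have hB2 : ‖∫ s in T..t, D s‖ ≤ ε / 4 := by
    have hae : ∀ᵐ s ∂MeasureTheory.volume.restrict (Set.uIoc T t),
        ‖D s‖ ≤ ε' * Real.exp (σ * (s - t)) := by
      rw [MeasureTheory.ae_restrict_iff' measurableSet_uIoc]
      refine MeasureTheory.ae_of_all _ fun s hs => ?_
      rw [Set.uIoc_of_le hTt] at hs
      have hfs : ‖f s - fstar‖ ≤ ε' := by
        have := hT₀ s (le_trans (le_max_left _ _) hs.1.le)
        rw [dist_eq_norm] at this
        exact this.le
      have hts : (0:ℝ) ≤ t - s := sub_nonneg.mpr hs.2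
      have h1 : ‖D s‖ ≤ Real.exp (-(σ * (t - s))) * ‖f s - fstar‖ :=
        aux_exp_apply_norm_le H hH σ hspec hts _
      calc ‖D s‖ ≤ Real.exp (-(σ * (t - s))) * ‖f s - fstar‖ := h1
        _ ≤ Real.exp (-(σ * (t - s))) * ε' :=
            mul_le_mul_of_nonneg_left hfs (Real.exp_nonneg _)
        _ = ε' * Real.exp (σ * (s - t)) := by
            rw [show -(σ * (t - s)) = σ * (s - t) by ring]; ring
    have hgint : IntervalIntegrable (fun s => ε' * Real.exp (σ * (s - t)))
        MeasureTheory.volume T t :=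
      (continuous_const.mul (Real.continuous_exp.comp
        (continuous_const.mul (continuous_id.sub continuous_const)))).intervalIntegrable T t
    have h2 := intervalIntegral.norm_integral_le_of_norm_le hTt
      (by rw [Set.uIoc_of_le hTt] at hae; exact (MeasureTheory.ae_restrict_iff' measurableSet_Ioc).mp hae) hgint
    have h3 : (∫ s in T..t, ε' * Real.exp (σ * (s - t)))
        = ε' * (σ⁻¹ - σ⁻¹ * Real.exp (σ * (T - t))) := by
      rw [intervalIntegral.integral_const_mul, aux_scalar_int σ hσ T t]
    have h4 : |∫ s in T..t, ε' * Real.exp (σ * (s - t))| ≤ ε / 4 := by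
      rw [h3]
      have hσinv : (0:ℝ) ≤ σ⁻¹ := inv_nonneg.mpr hσ.le
      have hle1 : Real.exp (σ * (T - t)) ≤ 1 :=
        Real.exp_le_one_iff.mpr (by nlinarith)
      have hnn : 0 ≤ σ⁻¹ - σ⁻¹ * Real.exp (σ * (T - t)) := by nlinarith
      rw [abs_of_nonneg (mul_nonneg hε'.le hnn)]
      calc ε' * (σ⁻¹ - σ⁻¹ * Real.exp (σ * (T - t))) ≤ ε' * σ⁻¹ :=
            mul_le_mul_of_nonneg_left
              (by nlinarith [Real.exp_nonneg (σ * (T - t))]) hε'.le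
        _ = ε / 4 := by rw [hε'def]; field_simp
    exact h2.trans ((le_abs_self _).trans h4)
  -- combine
  rw [dist_eq_norm, hdecomp, hDsplit]
  have hE : ‖NormedSpace.exp (t • H) (ν₀ - w)‖ ≤ Real.exp (-(σ * t)) * ‖ν₀ - w‖ :=
    aux_exp_apply_norm_le H hH σ hspec ht0 _
  calc ‖NormedSpace.exp (t • H) (ν₀ - w) + ((∫ s in (0:ℝ)..T, D s) + ∫ s in T..t, D s)‖
      ≤ ‖NormedSpace.exp (t • H) (ν₀ - w)‖ + (‖∫ s in (0:ℝ)..T, D s‖ + ‖∫ s in T..t, D s‖) :=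
        (norm_add_le _ _).trans (by gcongr; exact norm_add_le _ _)
    _ ≤ Real.exp (-(σ * t)) * ‖ν₀ - w‖ + (M * T * Real.exp (σ * T) * Real.exp (-(σ * t)) + ε / 4) := by
        gcongr
    _ = C * Real.exp (-(σ * t)) + ε / 4 := by rw [hCdef]; ring
    _ < ε / 2 + ε / 4 := by linarith
    _ < ε := by linarith
end

section
/- Let E be a bounded self-adjoint operator on ℓ²(ℤ^d) with a simple eigenvalue 0 whose eigenfunction is f, and suppose the spectrum of E restricted to the orthogonal complement of f is contained in (-∞,-s] for some s > 0. Let g : [0,∞) → ℓ²(ℤ^d) be continuous with g(t) → g* as t → ∞, where ⟨f, g*⟩ ≠ 0. Then any mild solution m of m' = E m + g satisfies ⟨f, m(t)⟩ ~ t ⟨f, g*⟩ as t → ∞, and hence ‖m(t)‖ grows linearly: m(t)/t → (⟨f,g*⟩/⟨f,f⟩) f in ℓ². -/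
open Filter

local notation "⟪" x ", " y "⟫" => @inner ℂ _ _ x y



/-- If `F' = h` on `[0,∞)` and `h → L`, then `F t / t → L`. -/
theorem aux_tendsto_inv_smul {X : Type*} [NormedAddCommGroup X] [NormedSpace ℝ X]
    {F h : ℝ → X} {L : X}
    (hF : ∀ t ≥ (0:ℝ), HasDerivAt F (h t) t)
    (hh : Tendsto h atTop (nhds L)) :
    Tendsto (fun t : ℝ => t⁻¹ • F t) atTop (nhds L) := by
  rw [Metric.tendsto_nhds]
  intro ε hε
  obtain ⟨T, hT⟩ : ∃ T : ℝ, ∀ u ≥ T, ‖h u - L‖ ≤ ε / 4 := by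
    have h0 : Tendsto (fun x => ‖h x - L‖) atTop (nhds 0) := by
      simpa using (hh.sub_const L).norm
    exact eventually_atTop.1 (h0.eventually_le_const (by positivity : (0:ℝ) < ε/4))
  set T0 : ℝ := max T 0 with hT0def
  have hT00 : (0:ℝ) ≤ T0 := le_max_right _ _
  set G : ℝ → X := fun t => F t - t • L with hGdef
  have key : ∀ t ≥ T0, ‖G t - G T0‖ ≤ ε/4 * (t - T0) := by
    intro t ht
    have hder : ∀ x ∈ Set.Icc T0 t, HasDerivWithinAt G (h x - L) (Set.Icc T0 t) x := by
      intro x hx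
      have h1 : HasDerivAt G (h x - L) x := by
        have := (hF x (le_trans hT00 hx.1)).sub ((hasDerivAt_id x).smul_const L)
        rw [one_smul] at this
        exact this
      exact h1.hasDerivWithinAt
    have hb : ∀ x ∈ Set.Icc T0 t, ‖h x - L‖ ≤ ε/4 := fun x hx =>
      hT x (le_trans (le_max_left _ _) hx.1)
    have := (convex_Icc T0 t).norm_image_sub_le_of_norm_hasDerivWithin_le hder hb
      (Set.left_mem_Icc.2 ht) (Set.right_mem_Icc.2 ht)
    calc ‖G t - G T0‖ ≤ ε/4 * ‖t - T0‖ := this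
      _ = ε/4 * (t - T0) := by rw [Real.norm_of_nonneg (by linarith)]
  have hbnd : Tendsto (fun t : ℝ => t⁻¹ * ‖G T0‖ + ε/4) atTop (nhds (0 * ‖G T0‖ + ε/4)) :=
    (tendsto_inv_atTop_zero.mul_const _).add_const _
  rw [zero_mul, zero_add] at hbnd
  have hev := hbnd.eventually_lt_const (by linarith : ε/4 < ε/2)
  filter_upwards [eventually_ge_atTop (max T0 1), hev] with t ht1 ht2
  have htT0 : T0 ≤ t := le_trans (le_max_left _ _) ht1
  have ht1' : (1:ℝ) ≤ t := le_trans (le_max_right _ _) ht1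
  have htpos : (0:ℝ) < t := lt_of_lt_of_le one_pos ht1'
  have heq : t⁻¹ • F t - L = t⁻¹ • G t := by
    rw [hGdef]
    simp [smul_sub, smul_smul, inv_mul_cancel₀ (ne_of_gt htpos)]
  rw [dist_eq_norm, heq, norm_smul, Real.norm_of_nonneg (by positivity : (0:ℝ) ≤ t⁻¹)]
  have hGt : ‖G t‖ ≤ ‖G T0‖ + ε/4 * (t - T0) := by
    have := norm_sub_norm_le (G t) (G T0)
    linarith [key t htT0]
  have h2 : t⁻¹ * ‖G t‖ ≤ t⁻¹ * ‖G T0‖ + ε/4 := by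
    have hinv : t * t⁻¹ = 1 := mul_inv_cancel₀ (ne_of_gt htpos)
    have h3 : t⁻¹ * (ε/4 * (t - T0)) ≤ ε/4 := by
      have h4 : 0 ≤ T0 * t⁻¹ := by positivity
      nlinarith [le_of_lt hε]
    calc t⁻¹ * ‖G t‖ ≤ t⁻¹ * (‖G T0‖ + ε/4 * (t - T0)) := by
          apply mul_le_mul_of_nonneg_left hGt (by positivity)
      _ = t⁻¹ * ‖G T0‖ + t⁻¹ * (ε/4 * (t - T0)) := by ring
      _ ≤ t⁻¹ * ‖G T0‖ + ε/4 := by linarith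
  calc t⁻¹ * ‖G t‖ ≤ t⁻¹ * ‖G T0‖ + ε/4 := h2
    _ < ε/2 := ht2
    _ < ε := by linarith


theorem aux_quad_bound {K : Type*} [NormedAddCommGroup K] [InnerProductSpace ℂ K]
    [CompleteSpace K] {A : K →L[ℂ] K} (hA : IsSelfAdjoint A) {s : ℝ} (hs : 0 < s)
    (hgap : ∀ z ∈ spectrum ℂ A, z.re ≤ -s) (v : K) :
    (⟪v, A v⟫).re ≤ -s * ‖v‖^2 := by
  rcases subsingleton_or_nontrivial K with hK | hK
  · have : v = 0 := Subsingleton.elim v 0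
    simp [this]
  set M : ℝ := ‖A + algebraMap ℂ (K →L[ℂ] K) (s : ℂ)‖ with hM
  have hM0 : 0 ≤ M := norm_nonneg _
  set c : ℝ := s + M/2 with hc
  set A₂ : K →L[ℂ] K := algebraMap ℂ (K →L[ℂ] K) (c : ℂ) + A with hA₂
  have hA₂sa : IsSelfAdjoint A₂ := by
    have hst : star (algebraMap ℂ (K →L[ℂ] K) (c:ℂ)) = algebraMap ℂ (K →L[ℂ] K) (c:ℂ) := by
      rw [Algebra.algebraMap_eq_smul_one, star_smul, star_one, Complex.star_def,
        Complex.conj_ofReal]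
    rw [hA₂, IsSelfAdjoint, star_add, hA.star_eq, hst]
  have hspec : ∀ z ∈ spectrum ℂ A₂, ‖z‖ ≤ M/2 := by
    intro z hz
    have hzre : z = (z.re : ℂ) := hA₂sa.mem_spectrum_eq_re hz
    rw [hA₂, ← spectrum.singleton_add_eq, Set.singleton_add] at hz
    obtain ⟨w, hw, hwz⟩ := hz
    have hzw : z.re = c + w.re := by rw [← hwz]; simp
    have hup : z.re ≤ M/2 := by rw [hzw, hc]; linarith [hgap w hw]
    have hlow : -(M/2) ≤ z.re := by
      have hw1 : w + (s:ℂ) ∈ spectrum ℂ (A + algebraMap ℂ (K →L[ℂ] K) (s:ℂ)) := by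
        rw [← spectrum.add_singleton_eq, Set.add_singleton]
        exact ⟨w, hw, rfl⟩
      have h2 : ‖w + (s:ℂ)‖ ≤ M := spectrum.norm_le_norm_of_mem hw1
      have h3 : -(M) ≤ (w + (s:ℂ)).re := by
        have := abs_le.1 (le_trans (Complex.abs_re_le_norm _) h2)
        exact this.1
      have h4 : w.re ≥ -M - s := by
        simp only [Complex.add_re, Complex.ofReal_re] at h3
        linarith
      rw [hzw, hc]; linarith
    rw [hzre, Complex.norm_real, Real.norm_eq_abs, abs_le]
    exact ⟨by linarith, hup⟩
  have hA₂norm : ‖A₂‖ ≤ M/2 := by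
    have hrad : spectralRadius ℂ A₂ ≤ ENNReal.ofReal (M/2) := by
      rw [spectralRadius]
      refine iSup₂_le fun z hz => ?_
      rw [← ENNReal.ofReal_coe_nnreal, coe_nnnorm]
      exact ENNReal.ofReal_le_ofReal (hspec z hz)
    rw [hA₂sa.spectralRadius_eq_nnnorm] at hrad
    have := ENNReal.toReal_mono ENNReal.ofReal_ne_top hrad
    rwa [ENNReal.coe_toReal, coe_nnnorm, ENNReal.toReal_ofReal (by linarith)] at this
  -- final computation
  have hAv : A v = A₂ v - (c:ℂ) • v := by
    rw [hA₂]
    simp [Algebra.algebraMap_eq_smul_one]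
  have hvv : (⟪v, v⟫).re = ‖v‖^2 := by
    simpa using inner_self_eq_norm_sq (𝕜 := ℂ) v
  have h1 : ((c:ℂ) * ⟪v, v⟫).re = c * ‖v‖^2 := by
    rw [Complex.mul_re]
    rw [Complex.ofReal_re, Complex.ofReal_im, hvv]; ring
  rw [hAv, inner_sub_right, inner_smul_right, Complex.sub_re, h1]
  have h2 : (⟪v, A₂ v⟫).re ≤ ‖v‖ * ‖A₂ v‖ := by
    simpa using re_inner_le_norm (𝕜 := ℂ) v (A₂ v)
  have h3 : ‖A₂ v‖ ≤ M/2 * ‖v‖ := le_trans (A₂.le_opNorm v) (by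
    apply mul_le_mul_of_nonneg_right hA₂norm (norm_nonneg v))
  have h4 : ‖v‖ * ‖A₂ v‖ ≤ M/2 * ‖v‖^2 := by nlinarith [norm_nonneg v]
  rw [hc]
  nlinarith [norm_nonneg v]


theorem aux_bounded {K : Type*} [NormedAddCommGroup K] [InnerProductSpace ℂ K]
    {A : K →L[ℂ] K} {s : ℝ} (hs : 0 < s)
    (hquad : ∀ v : K, (⟪v, A v⟫).re ≤ -s * ‖v‖^2)
    {y u : ℝ → K} {B : ℝ}
    (hy : ∀ t ≥ (0:ℝ), HasDerivAt y (A (y t) + u t) t)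
    (hu : ∀ t ≥ (0:ℝ), ‖u t‖ ≤ B) :
    ∀ t ≥ (0:ℝ), ‖y t‖ ≤ Real.sqrt (‖y 0‖^2 + B^2/s^2) := by
  set N : ℝ → ℝ := fun t => ‖y t‖^2 with hNdef
  set C : ℝ := B^2/s with hCdef
  have hBnn : 0 ≤ B := le_trans (norm_nonneg _) (hu 0 le_rfl)
  have hC0 : 0 ≤ C := by positivity
  set W : ℝ → ℝ := fun t => Real.exp (s*t) * (N t - C/s) with hWdef
  have hN' : ∀ t ≥ (0:ℝ), HasDerivAt N (2 * (⟪y t, A (y t) + u t⟫).re) t := by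
    intro t ht
    have h1 := (hy t ht).inner ℂ (hy t ht)
    have h2 := (Complex.reCLM.hasFDerivAt
      (x := ⟪y t, y t⟫)).comp_hasDerivAt t h1
    have h3 : (fun x => Complex.reCLM ⟪y x, y x⟫) = N := by
      funext x
      have := inner_self_eq_norm_sq (𝕜 := ℂ) (y x)
      simpa using this
    have h2' : HasDerivAt (fun x => Complex.reCLM ⟪y x, y x⟫)
        (Complex.reCLM (⟪y t, A (y t) + u t⟫ + ⟪A (y t) + u t, y t⟫)) t := h2
    rw [h3] at h2'
    have h5 : ⟪A (y t) + u t, y t⟫ = (starRingEnd ℂ) ⟪y t, A (y t) + u t⟫ :=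
      (inner_conj_symm _ _).symm
    have h4 : Complex.reCLM (⟪y t, A (y t) + u t⟫ + ⟪A (y t) + u t, y t⟫)
        = 2 * (⟪y t, A (y t) + u t⟫).re := by
      show (⟪y t, A (y t) + u t⟫ + ⟪A (y t) + u t, y t⟫).re
          = 2 * (⟪y t, A (y t) + u t⟫).re
      rw [h5, Complex.add_re, Complex.conj_re]
      ring
    rwa [h4] at h2'
  have hWderiv : ∀ t ≥ (0:ℝ), HasDerivAt W
      (Real.exp (s*t) * ((2 * (⟪y t, A (y t) + u t⟫).re) + s * (N t - C/s))) t := by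
    intro t ht
    have he : HasDerivAt (fun t => Real.exp (s*t)) (s * Real.exp (s*t)) t := by
      have := (Real.hasDerivAt_exp (s*t)).comp t ((hasDerivAt_id t).const_mul s)
      simpa [mul_comm, Function.comp_def] using this
    have := he.mul ((hN' t ht).sub_const (C/s))
    refine this.congr_deriv ?_
    ring
  have hnonpos : ∀ t ≥ (0:ℝ),
      Real.exp (s*t) * ((2 * (⟪y t, A (y t) + u t⟫).re) + s * (N t - C/s)) ≤ 0 := by
    intro t ht
    have hri : (⟪y t, A (y t) + u t⟫).re = (⟪y t, A (y t)⟫).re + (⟪y t, u t⟫).re := by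
      rw [inner_add_right]; simp
    have hq := hquad (y t)
    have hcs : (⟪y t, u t⟫).re ≤ ‖y t‖ * B := by
      have h6 : (⟪y t, u t⟫).re ≤ ‖y t‖ * ‖u t‖ := by
        simpa using re_inner_le_norm (𝕜 := ℂ) (y t) (u t)
      exact le_trans h6 (mul_le_mul_of_nonneg_left (hu t ht) (norm_nonneg _))
    have hexp : (0:ℝ) < Real.exp (s*t) := Real.exp_pos _
    have hkey : (2 * (⟪y t, A (y t) + u t⟫).re) + s * (N t - C/s) ≤ 0 := by
      have hNt : N t = ‖y t‖^2 := rfl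
      have hdiv : s * (C/s) = C := by field_simp
      have hdiv2 : s * C = B^2 := by rw [hCdef]; field_simp
      rw [hri, hNt]
      nlinarith [sq_nonneg (s * ‖y t‖ - B), norm_nonneg (y t)]
    have := mul_le_mul_of_nonneg_left hkey (le_of_lt hexp)
    simpa using this
  have hWanti : AntitoneOn W (Set.Ici 0) := by
    apply antitoneOn_of_deriv_nonpos (convex_Ici 0)
    · exact fun t ht => (hWderiv t ht).continuousAt.continuousWithinAt
    · intro t ht
      rw [interior_Ici] at ht
      exact (hWderiv t (le_of_lt ht)).differentiableAt.differentiableWithinAt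
    · intro t ht
      rw [interior_Ici] at ht
      rw [(hWderiv t (le_of_lt ht)).deriv]
      exact hnonpos t (le_of_lt ht)
  intro t ht
  have hW0 : W t ≤ W 0 := hWanti (Set.mem_Ici.mpr le_rfl) (Set.mem_Ici.mpr ht) ht
  have hNle : N t ≤ ‖y 0‖^2 + C/s := by
    have hexp1 : (1:ℝ) ≤ Real.exp (s*t) := Real.one_le_exp (by positivity)
    have hW0' : W 0 = N 0 - C/s := by simp [hWdef]
    have hN0 : N 0 = ‖y 0‖^2 := rfl
    have hCs0 : 0 ≤ C/s := div_nonneg hC0 (le_of_lt hs)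
    by_cases hcase : N t - C/s ≤ 0
    · nlinarith [sq_nonneg ‖y 0‖]
    · push_neg at hcase
      have h7 : N t - C/s ≤ Real.exp (s*t) * (N t - C/s) :=
        le_mul_of_one_le_left (le_of_lt (by linarith)) hexp1
      have h8 : N t - C/s ≤ N 0 - C/s := le_trans h7 (by rw [← hW0']; exact hW0)
      nlinarith
  have hfin : ‖y t‖^2 ≤ ‖y 0‖^2 + B^2/s^2 := by
    have hCs : C/s = B^2/s^2 := by rw [hCdef, div_div]; ring_nf
    rw [← hCs]; exact hNle
  calc ‖y t‖ = Real.sqrt (‖y t‖^2) := (Real.sqrt_sq (norm_nonneg _)).symm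
    _ ≤ _ := Real.sqrt_le_sqrt hfin



set_option maxHeartbeats 1000000 in
/-- critical case: `E` bounded self-adjoint on `ℓ²(ℤ^d)` with simple
eigenvalue `0` (eigenfunction `f`) and spectral gap on `fᗮ`; if the forcing `g`
converges to `g*` with `⟪f,g*⟫ ≠ 0`, then `⟪f, m(t)⟫ ~ t ⟪f, g*⟫` and
`m(t)/t → (⟪f,g*⟫/⟪f,f⟫) f` for any solution of `m' = E m + g`. -/
theorem critical_case_linear_growth
    (d : ℕ)
    (E : lp (fun _ : (Fin d → ℤ) => ℂ) 2 →L[ℂ] lp (fun _ : (Fin d → ℤ) => ℂ) 2)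
    (hE : IsSelfAdjoint E)
    (f : lp (fun _ : (Fin d → ℤ) => ℂ) 2) (hf : f ≠ 0) (heig : E f = 0)
    (hsimple : ∀ v, E v = 0 → ∃ c : ℂ, v = c • f)
    (s : ℝ) (hs : 0 < s)
    (E' : (ℂ ∙ f)ᗮ →L[ℂ] (ℂ ∙ f)ᗮ)
    (hE'compat : ∀ v : (ℂ ∙ f)ᗮ, (E' v : lp (fun _ : (Fin d → ℤ) => ℂ) 2) = E v)
    (hgap : ∀ z ∈ spectrum ℂ E', z.re ≤ -s)
    (g : ℝ → lp (fun _ : (Fin d → ℤ) => ℂ) 2) (hgcont : ContinuousOn g (Set.Ici 0))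
    (gstar : lp (fun _ : (Fin d → ℤ) => ℂ) 2)
    (hglim : Tendsto g atTop (nhds gstar)) (hgstar : ⟪f, gstar⟫ ≠ 0)
    (m : ℝ → lp (fun _ : (Fin d → ℤ) => ℂ) 2)
    (hm : ∀ t ≥ (0:ℝ), HasDerivAt m (E (m t) + g t) t) :
    Tendsto (fun t : ℝ => ⟪f, m t⟫ / (t : ℂ)) atTop (nhds ⟪f, gstar⟫) ∧
      Tendsto (fun t : ℝ => ((t : ℂ))⁻¹ • m t) atTop
        (nhds ((⟪f, gstar⟫ / ⟪f, f⟫) • f)) := by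
  -- ⟪f, E x⟫ = 0
  have hEadj : ContinuousLinearMap.adjoint E = E := ContinuousLinearMap.isSelfAdjoint_iff'.mp hE
  have hEf : ∀ x, ⟪f, E x⟫ = 0 := by
    intro x
    rw [← ContinuousLinearMap.adjoint_inner_left, hEadj, heig, inner_zero_left]
  -- Part 1
  have hφ : ∀ t ≥ (0:ℝ), HasDerivAt (fun t => ⟪f, m t⟫) (⟪f, g t⟫) t := by
    intro t ht
    have h1 := (hasDerivAt_const t f).inner ℂ (hm t ht)
    simpa [inner_add_right, hEf, inner_zero_left] using h1
  have hlim1 : Tendsto (fun t => ⟪f, g t⟫) atTop (nhds ⟪f, gstar⟫) :=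
    Filter.Tendsto.inner tendsto_const_nhds hglim
  have part1' := aux_tendsto_inv_smul hφ hlim1
  have part1 : Tendsto (fun t : ℝ => ⟪f, m t⟫ / (t : ℂ)) atTop (nhds ⟪f, gstar⟫) := by
    refine part1'.congr fun t => ?_
    rw [Complex.real_smul, Complex.ofReal_inv, div_eq_mul_inv, mul_comm]
  refine ⟨part1, ?_⟩
  -- Part 2
  set P := Submodule.orthogonalProjectionOnto ((ℂ ∙ f)ᗮ) with hP
  set y : ℝ → ((ℂ ∙ f)ᗮ : Submodule ℂ (lp (fun _ : (Fin d → ℤ) => ℂ) 2)) := fun t => P (m t) with hy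
  -- E' is self-adjoint
  have hE'sa : IsSelfAdjoint E' := by
    rw [ContinuousLinearMap.isSelfAdjoint_iff_isSymmetric]
    intro v w
    have hEsym := ContinuousLinearMap.isSelfAdjoint_iff_isSymmetric.mp hE
    calc ⟪(E' v : lp (fun _ : (Fin d → ℤ) => ℂ) 2), (w : lp (fun _ : (Fin d → ℤ) => ℂ) 2)⟫ = ⟪E (v : lp (fun _ : (Fin d → ℤ) => ℂ) 2), (w : lp (fun _ : (Fin d → ℤ) => ℂ) 2)⟫ := by rw [hE'compat]
      _ = ⟪(v : lp (fun _ : (Fin d → ℤ) => ℂ) 2), E (w : lp (fun _ : (Fin d → ℤ) => ℂ) 2)⟫ := hEsym _ _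
      _ = ⟪(v : lp (fun _ : (Fin d → ℤ) => ℂ) 2), (E' w : lp (fun _ : (Fin d → ℤ) => ℂ) 2)⟫ := by rw [hE'compat]
  have hquad := aux_quad_bound hE'sa hs hgap
  -- derivative of y
  have hyD : ∀ t ≥ (0:ℝ), HasDerivAt y (E' (y t) + P (g t)) t := by
    intro t ht
    have h1 : HasDerivAt (fun u => P (m u)) (P (E (m t) + g t)) t :=
      ((P.hasFDerivAt (x := m t)).restrictScalars ℝ).comp_hasDerivAt t (hm t ht)
    have hspan : E ((Submodule.orthogonalProjectionOnto (ℂ ∙ f) (m t) : lp (fun _ : (Fin d → ℤ) => ℂ) 2)) = 0 := by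
      obtain ⟨c, hc⟩ := Submodule.mem_span_singleton.1 (Submodule.orthogonalProjectionOnto (ℂ ∙ f) (m t)).2
      rw [← hc, map_smul, heig, smul_zero]
    have hEm : E (m t) = ((E' (y t) : lp (fun _ : (Fin d → ℤ) => ℂ) 2)) := by
      rw [hE'compat]
      conv_lhs => rw [← Submodule.starProjection_add_starProjection_orthogonal (K := ℂ ∙ f) (m t),
        Submodule.starProjection_apply, Submodule.starProjection_apply]
      rw [map_add, hspan, zero_add]
    have h2 : P (E (m t) + g t) = E' (y t) + P (g t) := by
      rw [map_add, hEm, Submodule.orthogonalProjectionOnto_mem_subspace_eq_self]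
    rwa [h2] at h1
  -- bound on forcing
  obtain ⟨Bg, hBg⟩ : ∃ Bg, ∀ t ≥ (0:ℝ), ‖g t‖ ≤ Bg := by
    have h1 : ∀ᶠ t in atTop, ‖g t‖ ≤ ‖gstar‖ + 1 :=
      hglim.norm.eventually_le_const (lt_add_one _)
    obtain ⟨T, hT⟩ := eventually_atTop.1 h1
    obtain ⟨Cb, hCb⟩ := (isCompact_Icc (a := (0:ℝ)) (b := max T 0)).exists_bound_of_continuousOn
      (hgcont.mono (fun x hx => hx.1))
    refine ⟨max Cb (‖gstar‖ + 1), fun t ht => ?_⟩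
    rcases le_total t (max T 0) with h | h
    · exact le_trans (hCb t ⟨ht, h⟩) (le_max_left _ _)
    · exact le_trans (hT t (le_trans (le_max_left _ _) h)) (le_max_right _ _)
  have hPg : ∀ t ≥ (0:ℝ), ‖P (g t)‖ ≤ Bg := by
    intro t ht
    refine le_trans ?_ (hBg t ht)
    calc ‖P (g t)‖ ≤ ‖P‖ * ‖g t‖ := P.le_opNorm _
      _ ≤ 1 * ‖g t‖ :=
        mul_le_mul_of_nonneg_right (Submodule.orthogonalProjectionOnto_norm_le _) (norm_nonneg _)
      _ = ‖g t‖ := one_mul _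
  -- boundedness of y
  have hbound := aux_bounded hs hquad hyD hPg
  set Cy : ℝ := Real.sqrt (‖y 0‖^2 + Bg^2/s^2) with hCy
  -- y t / t → 0
  have hy0 : Tendsto (fun t : ℝ => (t:ℂ)⁻¹ • ((y t : lp (fun _ : (Fin d → ℤ) => ℂ) 2))) atTop (nhds 0) := by
    apply squeeze_zero_norm' (a := fun t : ℝ => t⁻¹ * Cy)
    · filter_upwards [eventually_ge_atTop (0:ℝ)] with t ht
      rw [norm_smul]
      have h1 : ‖((t:ℂ))⁻¹‖ = t⁻¹ := by
        rw [norm_inv, Complex.norm_real, Real.norm_of_nonneg ht]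
      rw [h1]
      have h2 : ‖((y t : lp (fun _ : (Fin d → ℤ) => ℂ) 2))‖ = ‖y t‖ := rfl
      rw [h2]
      exact mul_le_mul_of_nonneg_left (hbound t ht) (by positivity)
    · have := tendsto_inv_atTop_zero.mul_const Cy
      simpa using this
  -- decomposition
  have hdecomp : ∀ t : ℝ, (t:ℂ)⁻¹ • m t
      = ((⟪f, m t⟫ / (t:ℂ)) / ⟪f, f⟫) • f + (t:ℂ)⁻¹ • ((y t : lp (fun _ : (Fin d → ℤ) => ℂ) 2)) := by
    intro t
    conv_lhs => rw [← Submodule.starProjection_add_starProjection_orthogonal (K := ℂ ∙ f) (m t)]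
    rw [Submodule.starProjection_singleton, Submodule.starProjection_apply (ℂ ∙ f)ᗮ, smul_add, smul_smul]
    congr 2
    rw [inner_self_eq_norm_sq_to_K]
    push_cast
    ring
  have hA := ((part1.div_const ⟪f, f⟫).smul_const f).add hy0
  rw [add_zero] at hA
  exact hA.congr fun t => (hdecomp t).symm
end
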